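/- Let k ∈ ℕ, let U be a unitary operator on H of class C^k(A), and let Φ be a function of class C^{k+2} on the unit circle (i.e. φ(θ) := Φ(e^{iθ}) is a 2π-periodic C^{k+2} function of θ ∈ ℝ), with Fourier coefficients φ̂_m = (1/2π) ∫_0^{2π} Φ(e^{iθ}) e^{−imθ} dθ. Then the series Σ_{m∈ℤ} φ̂_m U^m converges in operator norm, its sum Φ(U) belongs to C^k(A), and for all j ∈ {0,…,k}, ad_A^j(Φ(U)) = Σ_{m∈ℤ} φ̂_m ad_A^j(U^m), the series converging in operator norm. -/

import Mathlib

variable {H : Type} [NormedAddCommGroup H] [InnerProductSpace ℂ H] [CompleteSpace H]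

/-- `C` is the bounded operator representing the commutator form
`F(φ,ψ) = ⟨Aφ, Bψ⟩ − ⟨φ, BAψ⟩` on `D(A) × D(A)`. -/
def IsCommutatorOf (A : H →ₗ.[ℂ] H) (B C : H →L[ℂ] H) : Prop :=
  ∀ x y : A.domain,
    (inner ℂ (A x) (B (y : H)) : ℂ) - inner ℂ (x : H) (B (A y)) = inner ℂ (x : H) (C (y : H))

/-- `D` is a chain of iterated commutators for `B` of length `k`; its existence means
`B ∈ C^k(A)` and `ad_A^j B = D j`. -/
def IsAdChain (A : H →ₗ.[ℂ] H) (B : H →L[ℂ] H) (D : ℕ → H →L[ℂ] H) (k : ℕ) : Prop :=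
  D 0 = B ∧ ∀ j < k, IsCommutatorOf A (D j) (D (j + 1))


section Basic
variable {A : H →ₗ.[ℂ] H}
set_option linter.unusedSectionVars false

/-- key closure fact -/
lemma key1 (hA : IsSelfAdjoint A) (z w : H)
    (h : ∀ x : A.domain, (inner ℂ (A x) z : ℂ) = inner ℂ (x : H) w) :
    ∃ hz : z ∈ A.domain, A ⟨z, hz⟩ = w := by
  have hd := hA.dense_domain
  have hmem : z ∈ A.adjoint.domain := by
    apply LinearPMap.mem_adjoint_domain_of_exists
    refine ⟨w, fun x => ?_⟩
    rw [show (inner ℂ z ((A x : H)) : ℂ) = _ from (inner_conj_symm _ _).symm, h x,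
      inner_conj_symm]
  have happ : A.adjoint ⟨z, hmem⟩ = w := by
    apply LinearPMap.adjoint_apply_eq hd
    intro x
    show (inner ℂ w ((x : H)) : ℂ) = inner ℂ z ((A x : H))
    rw [show (inner ℂ z ((A x : H)) : ℂ) = _ from (inner_conj_symm _ _).symm, h x,
      inner_conj_symm]
  have hAeq : A.adjoint = A := hA
  rw [← hAeq]
  exact ⟨hmem, happ⟩

lemma Asymm (hA : IsSelfAdjoint A) (x y : A.domain) :
    (inner ℂ (A x) (y : H) : ℂ) = inner ℂ (x : H) (A y) := by
  have hd := hA.dense_domain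
  have h := LinearPMap.adjoint_isFormalAdjoint hd
  have hAeq : A.adjoint = A := hA
  rw [hAeq] at h
  exact h x y

lemma comm_smul {B C : H →L[ℂ] H} (a : ℂ) (h : IsCommutatorOf A B C) :
    IsCommutatorOf A (a • B) (a • C) := by
  intro x y
  simp only [ContinuousLinearMap.smul_apply, inner_smul_right, ← h x y]
  ring

lemma comm_add {B C B' C' : H →L[ℂ] H} (h : IsCommutatorOf A B C)
    (h' : IsCommutatorOf A B' C') : IsCommutatorOf A (B + B') (C + C') := by
  intro x y
  simp only [ContinuousLinearMap.add_apply, inner_add_right, ← h x y, ← h' x y]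
  ring

lemma comm_zero : IsCommutatorOf A 0 0 := by
  intro x y; simp

lemma comm_one (hA : IsSelfAdjoint A) : IsCommutatorOf A 1 0 := by
  intro x y
  simp [Asymm hA x y]

lemma comm_sum {s : Finset ℕ} {F G : ℕ → H →L[ℂ] H}
    (h : ∀ i ∈ s, IsCommutatorOf A (F i) (G i)) :
    IsCommutatorOf A (∑ i ∈ s, F i) (∑ i ∈ s, G i) := by
  classical
  induction s using Finset.induction with
  | empty => simpa using (comm_zero (A := A))
  | insert _ _ hx ih =>
    rw [Finset.sum_insert hx, Finset.sum_insert hx]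
    exact comm_add (h _ (Finset.mem_insert_self _ _))
      (ih fun i hi => h i (Finset.mem_insert_of_mem hi))

lemma comm_star {B C : H →L[ℂ] H} (h : IsCommutatorOf A B C) :
    IsCommutatorOf A (star B) (-(star C)) := by
  intro x y
  have h' := h y x
  have e1 : (inner ℂ ((A y : H)) (B (x : H)) : ℂ) = inner ℂ ((star B) (A y)) (x : H) := by
    rw [ContinuousLinearMap.star_eq_adjoint, ContinuousLinearMap.adjoint_inner_left]
  have e2 : (inner ℂ ((y : H)) (B (A x)) : ℂ) = inner ℂ ((star B) (y : H)) ((A x : H)) := by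
    rw [ContinuousLinearMap.star_eq_adjoint, ContinuousLinearMap.adjoint_inner_left]
  have e3 : (inner ℂ ((y : H)) (C (x : H)) : ℂ) = inner ℂ ((star C) (y : H)) (x : H) := by
    rw [ContinuousLinearMap.star_eq_adjoint, ContinuousLinearMap.adjoint_inner_left]
  rw [e1, e2, e3] at h'
  have h'' := congrArg (starRingEnd ℂ) h'
  simp only [map_sub, inner_conj_symm] at h''
  simp only [ContinuousLinearMap.neg_apply, inner_neg_right]
  linear_combination -h''
end Basic

section Mul
variable {A : H →ₗ.[ℂ] H}
set_option linter.unusedSectionVars false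

lemma comm_mul (hA : IsSelfAdjoint A) {B C B₁ C₁ : H →L[ℂ] H}
    (hB : IsCommutatorOf A B B₁) (hC : IsCommutatorOf A C C₁) :
    IsCommutatorOf A (B * C) (B₁ * C + B * C₁) := by
  intro x y
  obtain ⟨hm, he⟩ := key1 hA (C (y : H)) (C (A y) + C₁ (y : H)) (fun x => by
    rw [inner_add_right, ← hC x y]; ring)
  have h2 := hB x ⟨C (y : H), hm⟩
  rw [he] at h2
  simp only [ContinuousLinearMap.mul_apply, ContinuousLinearMap.add_apply, map_add,
    inner_add_right, Submodule.coe_mk] at h2 ⊢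
  linear_combination h2

/-- the Leibniz combination of two chains -/
noncomputable def leib (F G : ℕ → H →L[ℂ] H) : ℕ → H →L[ℂ] H := fun j =>
  ∑ i ∈ Finset.range (j + 1), ((j.choose i : ℂ)) • (F i * G (j - i))

lemma leib_succ (F G : ℕ → H →L[ℂ] H) (j : ℕ) :
    ∑ i ∈ Finset.range (j + 1),
        (j.choose i : ℂ) • (F (i + 1) * G (j - i) + F i * G (j - i + 1))
      = leib F G (j + 1) := by
  classical
  set a : ℕ → H →L[ℂ] H := fun i => F i * G (j + 1 - i) with ha
  have key : ∀ i ∈ Finset.range (j + 1),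
      (j.choose i : ℂ) • (F (i + 1) * G (j - i) + F i * G (j - i + 1))
        = (fun i => if i = 0 then 0 else (j.choose (i - 1) : ℂ) • a i) (i + 1)
          + (fun i => (j.choose i : ℂ) • a i) i := by
    intro i hi
    rw [Finset.mem_range] at hi
    have h1 : j + 1 - (i + 1) = j - i := by omega
    have h2 : j - i + 1 = j + 1 - i := by omega
    simp only [ha, if_neg (Nat.succ_ne_zero i), Nat.add_sub_cancel, h1, h2, smul_add]
  rw [Finset.sum_congr rfl key, Finset.sum_add_distrib]
  have e1 : ∑ i ∈ Finset.range (j + 1),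
      (fun i => if i = 0 then 0 else (j.choose (i - 1) : ℂ) • a i) (i + 1)
      = ∑ i ∈ Finset.range (j + 2),
        (if i = 0 then 0 else (j.choose (i - 1) : ℂ) • a i) := by
    rw [Finset.sum_range_succ' (fun i => if i = 0 then 0 else (j.choose (i - 1) : ℂ) • a i)]
    simp
  have e2 : ∑ i ∈ Finset.range (j + 1), (fun i => (j.choose i : ℂ) • a i) i
      = ∑ i ∈ Finset.range (j + 2), (j.choose i : ℂ) • a i := by
    rw [Finset.sum_range_succ (fun i => (j.choose i : ℂ) • a i) (j+1)]
    simp [Nat.choose_eq_zero_of_lt (Nat.lt_succ_self j)]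
  rw [e1, e2, ← Finset.sum_add_distrib]
  unfold leib
  refine Finset.sum_congr rfl fun i _ => ?_
  rcases i with _ | m
  · simp [ha]
  · have : (j + 1).choose (m + 1) = j.choose m + j.choose (m + 1) := Nat.choose_succ_succ j m
    simp only [if_neg (Nat.succ_ne_zero m), Nat.add_sub_cancel, this, Nat.cast_add, add_smul, ha]

lemma chain_leib (hA : IsSelfAdjoint A) {B C : H →L[ℂ] H} {F G : ℕ → H →L[ℂ] H} {k : ℕ}
    (hF : IsAdChain A B F k) (hG : IsAdChain A C G k) :
    IsAdChain A (B * C) (leib F G) k := by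
  constructor
  · simp [leib, hF.1, hG.1]
  · intro j hj
    rw [← leib_succ F G j]
    apply comm_sum
    intro i hi
    rw [Finset.mem_range] at hi
    apply comm_smul
    exact comm_mul hA (hF.2 i (by omega)) (hG.2 (j - i) (by omega))

end Mul

section Pow
variable {A : H →ₗ.[ℂ] H}
set_option linter.unusedSectionVars false

noncomputable def powChain (F : ℕ → H →L[ℂ] H) : ℕ → ℕ → H →L[ℂ] H
  | 0 => fun j => if j = 0 then 1 else 0
  | n + 1 => leib (powChain F n) F

lemma chain_one (hA : IsSelfAdjoint A) (k : ℕ) :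
    IsAdChain A 1 (fun j => if j = 0 then (1 : H →L[ℂ] H) else 0) k := by
  refine ⟨by simp, fun j hj => ?_⟩
  rcases Nat.eq_zero_or_pos j with h | h
  · subst h
    simpa using comm_one hA
  · simp only [if_neg (Nat.pos_iff_ne_zero.mp h), if_neg (Nat.succ_ne_zero j)]
    exact comm_zero

lemma chain_pow (hA : IsSelfAdjoint A) {B : H →L[ℂ] H} {F : ℕ → H →L[ℂ] H} {k : ℕ}
    (hF : IsAdChain A B F k) (n : ℕ) : IsAdChain A (B ^ n) (powChain F n) k := by
  induction n with
  | zero => simpa [powChain] using chain_one hA k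
  | succ n ih =>
    rw [pow_succ]
    exact chain_leib hA ih hF

lemma chain_star (hA : IsSelfAdjoint A) {B : H →L[ℂ] H} {F : ℕ → H →L[ℂ] H} {k : ℕ}
    (hF : IsAdChain A B F k) :
    IsAdChain A (star B) (fun j => ((-1 : ℂ) ^ j) • star (F j)) k := by
  refine ⟨by simp [hF.1], fun j hj => ?_⟩
  have h := comm_smul (A := A) ((-1 : ℂ) ^ j) (comm_star (hF.2 j hj))
  have : ((-1 : ℂ) ^ j) • (-(star (F (j + 1)))) = ((-1 : ℂ) ^ (j + 1)) • star (F (j + 1)) := by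
    rw [pow_succ, smul_neg, mul_smul]
    simp
  rwa [this] at h

lemma comm_unique (hA : IsSelfAdjoint A) {B C C' : H →L[ℂ] H}
    (h : IsCommutatorOf A B C) (h' : IsCommutatorOf A B C') : C = C' := by
  have hd := hA.dense_domain
  have hy : ∀ y : A.domain, C (y : H) = C' (y : H) := fun y =>
    hd.eq_of_inner_right ℂ fun v hv => by rw [← h ⟨v, hv⟩ y, ← h' ⟨v, hv⟩ y]
  ext x
  have := Continuous.ext_on hd C.continuous C'.continuous (fun z hz => hy ⟨z, hz⟩)
  exact congrFun this x

lemma chain_unique (hA : IsSelfAdjoint A) {B : H →L[ℂ] H} {F G : ℕ → H →L[ℂ] H} {k : ℕ}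
    (hF : IsAdChain A B F k) (hG : IsAdChain A B G k) : ∀ j ≤ k, F j = G j := by
  intro j
  induction j with
  | zero => intro _; rw [hF.1, hG.1]
  | succ j ih =>
    intro hjk
    have hj : j < k := by omega
    have he : F j = G j := ih (by omega)
    exact comm_unique hA (hF.2 j hj) (he ▸ hG.2 j hj)

end Pow

section Bound
variable {A : H →ₗ.[ℂ] H}
set_option linter.unusedSectionVars false

lemma powChain_zero_le (F : ℕ → H →L[ℂ] H) (hF0 : ‖F 0‖ ≤ 1) (n : ℕ) :
    ‖powChain F n 0‖ ≤ 1 := by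
  induction n with
  | zero =>
    simp only [powChain, if_pos rfl]
    exact ContinuousLinearMap.norm_id_le
  | succ n ih =>
    have : powChain F (n + 1) 0 = powChain F n 0 * F 0 := by
      show leib (powChain F n) F 0 = _
      simp [leib]
    rw [this]
    calc ‖powChain F n 0 * F 0‖ ≤ ‖powChain F n 0‖ * ‖F 0‖ := norm_mul_le _ _
    _ ≤ 1 * 1 := by
        apply mul_le_mul ih hF0 (norm_nonneg _) zero_le_one
    _ = 1 := by ring

lemma powChain_norm_bound (F : ℕ → H →L[ℂ] H) (k : ℕ) (M : ℝ) (hM : 1 ≤ M)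
    (hF0 : ‖F 0‖ ≤ 1) (hFM : ∀ i ≤ k, ‖F i‖ ≤ M) :
    ∃ C : ℝ, 1 ≤ C ∧ ∀ j ≤ k, ∀ n : ℕ, ‖powChain F n j‖ ≤ C * ((n : ℝ) + 1) ^ j := by
  suffices h : ∀ j ≤ k, ∃ C : ℝ, 1 ≤ C ∧
      ∀ i ≤ j, ∀ n : ℕ, ‖powChain F n i‖ ≤ C * ((n : ℝ) + 1) ^ i by
    obtain ⟨C, hC1, hC⟩ := h k le_rfl
    exact ⟨C, hC1, fun j hj n => hC j hj n⟩
  intro j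
  induction j with
  | zero =>
    intro _
    refine ⟨1, le_rfl, fun i hi n => ?_⟩
    interval_cases i
    simpa using powChain_zero_le F hF0 n
  | succ j ih =>
    intro hjk
    obtain ⟨C', hC'1, hC'⟩ := ih (by omega)
    set K : ℝ := M * 2 ^ (j + 1) * C' with hKdef
    have hK0 : 0 ≤ K := by positivity
    have main : ∀ n : ℕ, ‖powChain F n (j + 1)‖ ≤ 1 + K * n * ((n : ℝ) + 1) ^ j := by
      intro n
      induction n with
      | zero =>
        simp only [powChain, if_neg (Nat.succ_ne_zero j), norm_zero, Nat.cast_zero]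
        nlinarith [pow_nonneg (by norm_num : (0:ℝ) ≤ 1) j]
      | succ n ihn =>
        have hstep : ‖powChain F (n + 1) (j + 1)‖ ≤
            ∑ i ∈ Finset.range (j + 2),
              (((j + 1).choose i : ℝ)) * (‖powChain F n i‖ * ‖F (j + 1 - i)‖) := by
          show ‖leib (powChain F n) F (j + 1)‖ ≤ _
          refine (norm_sum_le _ _).trans (Finset.sum_le_sum fun i hi => ?_)
          rw [norm_smul]
          simp only [Complex.norm_natCast]
          exact mul_le_mul_of_nonneg_left (norm_mul_le _ _) (Nat.cast_nonneg _)
        have hsplit : ∑ i ∈ Finset.range (j + 2),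
              (((j + 1).choose i : ℝ)) * (‖powChain F n i‖ * ‖F (j + 1 - i)‖)
            = (∑ i ∈ Finset.range (j + 1),
              (((j + 1).choose i : ℝ)) * (‖powChain F n i‖ * ‖F (j + 1 - i)‖))
              + ‖powChain F n (j + 1)‖ * ‖F 0‖ := by
          rw [Finset.sum_range_succ]
          simp
        have hterm : ∀ i ∈ Finset.range (j + 1),
            (((j + 1).choose i : ℝ)) * (‖powChain F n i‖ * ‖F (j + 1 - i)‖)
              ≤ (((j + 1).choose i : ℝ)) * (C' * ((n : ℝ) + 1) ^ j * M) := by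
          intro i hi
          rw [Finset.mem_range] at hi
          have h1 : ‖powChain F n i‖ ≤ C' * ((n : ℝ) + 1) ^ i := hC' i (by omega) n
          have h2 : ‖F (j + 1 - i)‖ ≤ M := hFM _ (by omega)
          have h3 : C' * ((n : ℝ) + 1) ^ i ≤ C' * ((n : ℝ) + 1) ^ j := by
            apply mul_le_mul_of_nonneg_left _ (by linarith)
            have h0n : (0:ℝ) ≤ (n : ℝ) := Nat.cast_nonneg n
            apply pow_le_pow_right₀ (by linarith) (by omega)
          apply mul_le_mul_of_nonneg_left _ (Nat.cast_nonneg _)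
          calc ‖powChain F n i‖ * ‖F (j + 1 - i)‖ ≤ (C' * ((n : ℝ) + 1) ^ j) * M := by
                apply mul_le_mul (h1.trans h3) h2 (norm_nonneg _) (by positivity)
          _ = C' * ((n : ℝ) + 1) ^ j * M := rfl
        have hchoose : ∑ i ∈ Finset.range (j + 1), (((j + 1).choose i : ℝ))
            ≤ 2 ^ (j + 1) := by
          have := Nat.sum_range_choose (j + 1)
          have h4 : ∑ i ∈ Finset.range (j + 2), ((j + 1).choose i) = 2 ^ (j + 1) := this
          have h5 : ∑ i ∈ Finset.range (j + 1), ((j + 1).choose i) ≤ 2 ^ (j + 1) := by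
            rw [← h4]
            exact Finset.sum_le_sum_of_subset (Finset.range_subset_range.mpr (by omega))
          calc ∑ i ∈ Finset.range (j + 1), (((j + 1).choose i : ℝ))
              = ((∑ i ∈ Finset.range (j + 1), ((j + 1).choose i) : ℕ) : ℝ) := by
                push_cast; ring
          _ ≤ ((2 ^ (j + 1) : ℕ) : ℝ) := by exact_mod_cast Nat.cast_le.mpr h5
          _ = 2 ^ (j + 1) := by push_cast; ring
        have hsum : ∑ i ∈ Finset.range (j + 1),
              (((j + 1).choose i : ℝ)) * (‖powChain F n i‖ * ‖F (j + 1 - i)‖)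
            ≤ 2 ^ (j + 1) * (C' * ((n : ℝ) + 1) ^ j * M) := by
          calc _ ≤ ∑ i ∈ Finset.range (j + 1),
                (((j + 1).choose i : ℝ)) * (C' * ((n : ℝ) + 1) ^ j * M) :=
              Finset.sum_le_sum hterm
          _ = (∑ i ∈ Finset.range (j + 1), (((j + 1).choose i : ℝ)))
                * (C' * ((n : ℝ) + 1) ^ j * M) := by rw [← Finset.sum_mul]
          _ ≤ 2 ^ (j + 1) * (C' * ((n : ℝ) + 1) ^ j * M) := by
              apply mul_le_mul_of_nonneg_right hchoose (by positivity)
        have hlast : ‖powChain F n (j + 1)‖ * ‖F 0‖ ≤ 1 + K * n * ((n : ℝ) + 1) ^ j := by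
          calc ‖powChain F n (j + 1)‖ * ‖F 0‖ ≤ ‖powChain F n (j + 1)‖ * 1 :=
              mul_le_mul_of_nonneg_left hF0 (norm_nonneg _)
          _ = ‖powChain F n (j + 1)‖ := mul_one _
          _ ≤ _ := ihn
        have hmono : ((n : ℝ) + 1) ^ j ≤ ((n : ℝ) + 1 + 1) ^ j := by
          apply pow_le_pow_left₀ (by positivity) (by linarith)
        calc ‖powChain F (n + 1) (j + 1)‖
            ≤ _ := hstep
        _ = _ := hsplit
        _ ≤ 2 ^ (j + 1) * (C' * ((n : ℝ) + 1) ^ j * M)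
              + (1 + K * n * ((n : ℝ) + 1) ^ j) := add_le_add hsum hlast
        _ = 1 + K * (((n : ℝ) + 1) ^ j + n * ((n : ℝ) + 1) ^ j) := by rw [hKdef]; ring
        _ = 1 + K * ((n : ℝ) + 1) * ((n : ℝ) + 1) ^ j := by ring
        _ ≤ 1 + K * ((n : ℝ) + 1) * ((n : ℝ) + 1 + 1) ^ j := by
            have := mul_le_mul_of_nonneg_left hmono (by positivity : (0:ℝ) ≤ K * ((n : ℝ) + 1))
            linarith
        _ = 1 + K * ((n : ℕ) + 1 : ℕ) * (((n + 1 : ℕ) : ℝ) + 1) ^ j := by push_cast; ring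
    refine ⟨max C' (1 + K), le_trans hC'1 (le_max_left _ _), fun i hi n => ?_⟩
    rcases Nat.lt_succ_iff_lt_or_eq.mp (Nat.lt_succ_of_le hi) with h | h
    · calc ‖powChain F n i‖ ≤ C' * ((n : ℝ) + 1) ^ i := hC' i (by omega) n
      _ ≤ max C' (1 + K) * ((n : ℝ) + 1) ^ i := by
          apply mul_le_mul_of_nonneg_right (le_max_left _ _) (by positivity)
    · subst h
      have h1 : ((n : ℝ)) * ((n : ℝ) + 1) ^ j ≤ ((n : ℝ) + 1) ^ (j + 1) := by
        rw [pow_succ]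
        nlinarith [pow_nonneg (by positivity : (0:ℝ) ≤ (n : ℝ) + 1) j]
      have h0n : (0:ℝ) ≤ (n : ℝ) := Nat.cast_nonneg n
      have h2 : (1 : ℝ) ≤ ((n : ℝ) + 1) ^ (j + 1) := one_le_pow₀ (by linarith)
      calc ‖powChain F n (j + 1)‖ ≤ 1 + K * n * ((n : ℝ) + 1) ^ j := main n
        _ ≤ (1 + K) * ((n : ℝ) + 1) ^ (j + 1) := by nlinarith
        _ ≤ max C' (1 + K) * ((n : ℝ) + 1) ^ (j + 1) := by
            apply mul_le_mul_of_nonneg_right (le_max_right _ _) (by positivity)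

end Bound

section Zpow
variable {A : H →ₗ.[ℂ] H}
set_option linter.unusedSectionVars false

lemma norm_unitary_le (U : unitary (H →L[ℂ] H)) : ‖(U : H →L[ℂ] H)‖ ≤ 1 := by
  have h := CStarRing.norm_star_mul_self (x := (U : H →L[ℂ] H))
  rw [Unitary.coe_star_mul_self] at h
  have h1 : ‖(1 : H →L[ℂ] H)‖ ≤ 1 := by
    rw [ContinuousLinearMap.one_def]; exact ContinuousLinearMap.norm_id_le
  nlinarith [norm_nonneg ((U : H →L[ℂ] H))]

lemma coe_zpow_nonneg (U : unitary (H →L[ℂ] H)) {m : ℤ} (hm : 0 ≤ m) :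
    ((U ^ m : unitary (H →L[ℂ] H)) : H →L[ℂ] H) = (U : H →L[ℂ] H) ^ m.toNat := by
  lift m to ℕ using hm
  rw [zpow_natCast, Int.toNat_natCast, SubmonoidClass.coe_pow]

lemma coe_zpow_neg (U : unitary (H →L[ℂ] H)) {m : ℤ} (hm : m < 0) :
    ((U ^ m : unitary (H →L[ℂ] H)) : H →L[ℂ] H)
      = (star (U : H →L[ℂ] H)) ^ (-m).toNat := by
  cases m with
  | ofNat p => exact absurd hm (by simp)
  | negSucc n =>
    have h2 : (-(Int.negSucc n)).toNat = n + 1 := rfl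
    rw [h2, zpow_negSucc, ← Unitary.star_eq_inv, Unitary.coe_star,
      SubmonoidClass.coe_pow, ← star_pow]

/-- canonical chain for `U^m`, `m : ℤ` -/
noncomputable def canChain (D : ℕ → H →L[ℂ] H) (m : ℤ) : ℕ → H →L[ℂ] H :=
  if 0 ≤ m then powChain D m.toNat
  else powChain (fun j => ((-1 : ℂ) ^ j) • star (D j)) (-m).toNat

lemma canChain_isAdChain (hA : IsSelfAdjoint A) {U : unitary (H →L[ℂ] H)}
    {D : ℕ → H →L[ℂ] H} {k : ℕ} (hD : IsAdChain A (U : H →L[ℂ] H) D k) (m : ℤ) :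
    IsAdChain A ((U ^ m : unitary (H →L[ℂ] H)) : H →L[ℂ] H) (canChain D m) k := by
  unfold canChain
  rcases le_or_gt 0 m with hm | hm
  · rw [if_pos hm, coe_zpow_nonneg U hm]
    exact chain_pow hA hD _
  · rw [if_neg (not_le.mpr hm), coe_zpow_neg U hm]
    exact chain_pow hA (chain_star hA hD) _

lemma canChain_bound {U : unitary (H →L[ℂ] H)}
    {D : ℕ → H →L[ℂ] H} {k : ℕ} (hD : IsAdChain A (U : H →L[ℂ] H) D k) :
    ∃ C : ℝ, 1 ≤ C ∧ ∀ m : ℤ, ∀ j ≤ k,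
      ‖canChain D m j‖ ≤ C * ((m.natAbs : ℝ) + 1) ^ j := by
  set M : ℝ := 1 + ∑ i ∈ Finset.range (k + 1), ‖D i‖ with hM
  have hM1 : 1 ≤ M := by
    have : 0 ≤ ∑ i ∈ Finset.range (k + 1), ‖D i‖ :=
      Finset.sum_nonneg fun i _ => norm_nonneg _
    linarith
  have hMi : ∀ i ≤ k, ‖D i‖ ≤ M := by
    intro i hi
    have : ‖D i‖ ≤ ∑ i ∈ Finset.range (k + 1), ‖D i‖ :=
      Finset.single_le_sum (fun i _ => norm_nonneg (D i)) (Finset.mem_range.mpr (by omega))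
    linarith
  have hD0 : ‖D 0‖ ≤ 1 := by rw [hD.1]; exact norm_unitary_le U
  obtain ⟨C1, hC11, hC1⟩ := powChain_norm_bound D k M hM1 hD0 hMi
  obtain ⟨C2, hC21, hC2⟩ := powChain_norm_bound (fun j => ((-1 : ℂ) ^ j) • star (D j)) k M hM1
    (by simpa using hD0) (fun i hi => by
      simpa [norm_smul] using hMi i hi)
  refine ⟨max C1 C2, le_trans hC11 (le_max_left _ _), fun m j hj => ?_⟩
  unfold canChain
  rcases le_or_gt 0 m with hm | hm
  · rw [if_pos hm]
    have hnat : ((m.toNat : ℕ) : ℝ) = ((m.natAbs : ℕ) : ℝ) := by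
      congr 1; omega
    calc ‖powChain D m.toNat j‖ ≤ C1 * ((m.toNat : ℝ) + 1) ^ j := hC1 j hj m.toNat
    _ ≤ max C1 C2 * ((m.natAbs : ℝ) + 1) ^ j := by
        rw [hnat]
        apply mul_le_mul_of_nonneg_right (le_max_left _ _) (by positivity)
  · rw [if_neg (not_le.mpr hm)]
    have hnat : (((-m).toNat : ℕ) : ℝ) = ((m.natAbs : ℕ) : ℝ) := by
      congr 1; omega
    calc ‖powChain _ (-m).toNat j‖ ≤ C2 * (((-m).toNat : ℝ) + 1) ^ j := hC2 j hj (-m).toNat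
    _ ≤ max C1 C2 * ((m.natAbs : ℝ) + 1) ^ j := by
        rw [hnat]
        apply mul_le_mul_of_nonneg_right (le_max_right _ _) (by positivity)

end Zpow

section Fourier
open Real intervalIntegral

lemma periodic_deriv' {ψ : ℝ → ℂ} {T : ℝ} (hper : Function.Periodic ψ T) :
    Function.Periodic (deriv ψ) T := by
  intro x
  have h1 : (fun y => ψ (y + T)) = ψ := funext hper
  calc deriv ψ (x + T) = deriv (fun y => ψ (y + T)) x := (deriv_comp_add_const ψ T x).symm
  _ = deriv ψ x := by rw [h1]

lemma contDiff_succ_deriv {ψ : ℝ → ℂ} {d : ℕ} (h : ContDiff ℝ (d + 1 : ℕ) ψ) :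
    Differentiable ℝ ψ ∧ ContDiff ℝ (d : ℕ) (deriv ψ) := by
  have h' : ContDiff ℝ ((d : WithTop ℕ∞) + 1) ψ := by
    exact_mod_cast h
  rw [contDiff_succ_iff_deriv] at h'
  exact ⟨h'.1, h'.2.2⟩

lemma fourier_decay (d : ℕ) :
    ∀ ψ : ℝ → ℂ, Function.Periodic ψ (2 * π) → ContDiff ℝ (d : ℕ) ψ →
    ∃ K : ℝ, 0 ≤ K ∧ ∀ m : ℤ, m ≠ 0 →
      ‖fourierCoeffOn Real.two_pi_pos ψ m‖ * (m.natAbs : ℝ) ^ d ≤ K := by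
  induction d with
  | zero =>
    intro ψ hper hsm
    refine ⟨(1 / (2 * π)) * ∫ x in (0:ℝ)..(2 * π), ‖ψ x‖, ?_, fun m hm => ?_⟩
    · have : 0 ≤ ∫ x in (0:ℝ)..(2 * π), ‖ψ x‖ :=
        intervalIntegral.integral_nonneg Real.two_pi_pos.le (fun x _ => norm_nonneg _)
      positivity
    · rw [pow_zero, mul_one]
      rw [fourierCoeffOn_eq_integral]
      rw [norm_smul]
      have h1 : ‖(1 / (2 * π - 0) : ℝ)‖ = 1 / (2 * π) := by
        rw [Real.norm_eq_abs, sub_zero, abs_of_pos (by positivity : (0:ℝ) < 1 / (2 * π))]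
      rw [h1]
      apply mul_le_mul_of_nonneg_left _ (by positivity)
      calc ‖∫ x in (0:ℝ)..(2 * π), fourier (-m) (x : AddCircle (2 * π - 0)) • ψ x‖
          ≤ ∫ x in (0:ℝ)..(2 * π), ‖fourier (-m) (x : AddCircle (2 * π - 0)) • ψ x‖ :=
            intervalIntegral.norm_integral_le_integral_norm Real.two_pi_pos.le
      _ = ∫ x in (0:ℝ)..(2 * π), ‖ψ x‖ := by
          apply intervalIntegral.integral_congr
          intro x _
          show ‖fourier (-m) (x : AddCircle (2 * π - 0)) • ψ x‖ = ‖ψ x‖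
          rw [norm_smul]
          have : ‖fourier (-m) (x : AddCircle (2 * π - 0))‖ = 1 := Circle.norm_coe _
          rw [this, one_mul]
  | succ d ih =>
    intro ψ hper hsm
    obtain ⟨hdiff, hsm'⟩ := contDiff_succ_deriv hsm
    obtain ⟨K, hK0, hK⟩ := ih (deriv ψ) (periodic_deriv' hper) hsm'
    refine ⟨K, hK0, fun m hm => ?_⟩
    have hder : ∀ x, x ∈ Set.uIcc (0:ℝ) (2 * π) → HasDerivAt ψ (deriv ψ x) x :=
      fun x _ => (hdiff x).hasDerivAt
    have hint : IntervalIntegrable (deriv ψ) MeasureTheory.volume 0 (2 * π) :=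
      (hsm'.continuous).intervalIntegrable _ _
    have heq := fourierCoeffOn_of_hasDerivAt Real.two_pi_pos hm hder hint
    have hψ : ψ (2 * π) - ψ 0 = 0 := by
      have := hper 0
      rw [zero_add] at this
      rw [this, sub_self]
    rw [hψ, mul_zero, zero_sub] at heq
    have hnorm : ‖fourierCoeffOn Real.two_pi_pos ψ m‖
        = (1 / (2 * π * |(m : ℝ)|)) * (2 * π * ‖fourierCoeffOn Real.two_pi_pos (deriv ψ) m‖) := by
      rw [heq, norm_mul, norm_neg, norm_mul]
      congr 1
      · rw [norm_div, norm_one]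
        congr 1
        have : (-2 * (π:ℂ) * Complex.I * (m:ℂ)) = ((2 * π : ℝ) : ℂ) * Complex.I * (-(m:ℂ)) := by
          push_cast; ring
        rw [this]
        rw [norm_mul, norm_mul, Complex.norm_real, Complex.norm_I, mul_one]
        rw [Real.norm_eq_abs, abs_of_pos Real.two_pi_pos]
        congr 1
        rw [norm_neg, Complex.norm_intCast]
      · congr 1
        rw [Complex.ofReal_zero, sub_zero, Complex.norm_real, Real.norm_eq_abs,
          abs_of_pos Real.two_pi_pos]
    have habs : |(m : ℝ)| = (m.natAbs : ℝ) := by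
      rw [Nat.cast_natAbs]
      push_cast
      ring
    have hna : (0:ℝ) < (m.natAbs : ℝ) := by
      exact_mod_cast Nat.pos_of_ne_zero (fun h => hm (Int.natAbs_eq_zero.mp h))
    have hcalc : ‖fourierCoeffOn Real.two_pi_pos ψ m‖ * ((m.natAbs : ℝ)) ^ (d + 1)
        = ‖fourierCoeffOn Real.two_pi_pos (deriv ψ) m‖ * ((m.natAbs : ℝ)) ^ d := by
      rw [hnorm, habs, pow_succ]
      field_simp
    rw [hcalc]
    exact hK m hm

end Fourier

section Bridge
open Real

lemma c_eq_fourierCoeffOn (φ : ℝ → ℂ) (m : ℤ) :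
    (1 / (2 * Real.pi) : ℂ) *
        ∫ θ in (0:ℝ)..(2 * Real.pi), φ θ * Complex.exp (-Complex.I * (m : ℂ) * (θ : ℂ))
      = fourierCoeffOn Real.two_pi_pos φ m := by
  rw [fourierCoeffOn_eq_integral]
  have hint : ∫ x in (0:ℝ)..(2 * π), fourier (-m) (x : AddCircle (2 * π - 0)) • φ x
      = ∫ θ in (0:ℝ)..(2 * Real.pi), φ θ * Complex.exp (-Complex.I * (m : ℂ) * (θ : ℂ)) := by
    apply intervalIntegral.integral_congr
    intro x _
    show fourier (-m) (x : AddCircle (2 * π - 0)) • φ x = _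
    rw [fourier_coe_apply, smul_eq_mul, mul_comm]
    congr 1
    congr 1
    have hπ : ((π : ℂ)) ≠ 0 := Complex.ofReal_ne_zero.mpr Real.pi_ne_zero
    push_cast
    field_simp
    ring
  rw [hint]
  rw [Complex.real_smul]
  congr 1
  push_cast
  norm_num

end Bridge

section Tsum
variable {A : H →ₗ.[ℂ] H}
set_option linter.unusedSectionVars false

lemma clm_tsum_apply (F : ℤ → H →L[ℂ] H) (hF : Summable F) (y : H) :
    (∑' m, F m) y = ∑' m, F m y :=
  (ContinuousLinearMap.apply ℂ H y).map_tsum hF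

lemma comm_tsum {F G : ℤ → H →L[ℂ] H} (hFG : ∀ m, IsCommutatorOf A (F m) (G m))
    (hF : Summable F) (hG : Summable G) :
    IsCommutatorOf A (∑' m, F m) (∑' m, G m) := by
  intro x y
  have hFy : Summable fun m => F m (y : H) :=
    hF.map (ContinuousLinearMap.apply ℂ H (y : H)) (ContinuousLinearMap.continuous _)
  have hFAy : Summable fun m => F m ((A y : H)) :=
    hF.map (ContinuousLinearMap.apply ℂ H ((A y : H))) (ContinuousLinearMap.continuous _)
  have hGy : Summable fun m => G m (y : H) :=
    hG.map (ContinuousLinearMap.apply ℂ H (y : H)) (ContinuousLinearMap.continuous _)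
  rw [clm_tsum_apply F hF, clm_tsum_apply F hF, clm_tsum_apply G hG]
  have e1 : (inner ℂ ((A x : H)) (∑' m, F m (y : H)) : ℂ) = ∑' m, inner ℂ ((A x : H)) (F m (y : H)) :=
    (innerSL ℂ ((A x : H))).map_tsum hFy
  have e2 : (inner ℂ ((x : H)) (∑' m, F m ((A y : H))) : ℂ)
      = ∑' m, inner ℂ ((x : H)) (F m ((A y : H))) :=
    (innerSL ℂ ((x : H))).map_tsum hFAy
  have e3 : (inner ℂ ((x : H)) (∑' m, G m (y : H)) : ℂ) = ∑' m, inner ℂ ((x : H)) (G m (y : H)) :=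
    (innerSL ℂ ((x : H))).map_tsum hGy
  rw [e1, e2, e3]
  have s1 : Summable fun m => (inner ℂ ((A x : H)) (F m (y : H)) : ℂ) :=
    hFy.map (innerSL ℂ ((A x : H))) (ContinuousLinearMap.continuous _)
  have s2 : Summable fun m => (inner ℂ ((x : H)) (F m ((A y : H))) : ℂ) :=
    hFAy.map (innerSL ℂ ((x : H))) (ContinuousLinearMap.continuous _)
  rw [← Summable.tsum_sub s1 s2]
  exact tsum_congr fun m => hFG m x y

end Tsum

/-- Let `U` be unitary of class `C^k(A)` and let `Φ` be of class `C^{k+2}` on the unit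
circle, encoded by the `2π`-periodic function `φ(θ) = Φ(e^{iθ})` of class `C^{k+2}`,
with Fourier coefficients `c m = (1/2π)∫_0^{2π} φ(θ)e^{−imθ}dθ`.  Then the series
`Σ_m c m • U^m` converges in operator norm; its sum `Φ(U)` belongs to `C^k(A)`, and for
every `j ≤ k`, `ad_A^j(Φ(U)) = Σ_m c m • ad_A^j(U^m)`, the series converging in
operator norm. -/
theorem stmt_12 (A : H →ₗ.[ℂ] H) (hA : IsSelfAdjoint A) (k : ℕ)
    (U : unitary (H →L[ℂ] H)) (D : ℕ → H →L[ℂ] H)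
    (hD : IsAdChain A (U : H →L[ℂ] H) D k)
    (φ : ℝ → ℂ) (hper : Function.Periodic φ (2 * Real.pi))
    (hsmooth : ContDiff ℝ (k + 2 : ℕ) φ)
    (c : ℤ → ℂ)
    (hc : ∀ m : ℤ, c m = (1 / (2 * Real.pi) : ℂ) *
      ∫ θ in (0:ℝ)..(2 * Real.pi), φ θ * Complex.exp (-Complex.I * (m : ℂ) * (θ : ℂ))) :
    Summable (fun m : ℤ => c m • ((U ^ m : unitary (H →L[ℂ] H)) : H →L[ℂ] H)) ∧
    (∃ E : ℤ → ℕ → H →L[ℂ] H,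
      ∀ m : ℤ, IsAdChain A ((U ^ m : unitary (H →L[ℂ] H)) : H →L[ℂ] H) (E m) k) ∧
    (∀ E : ℤ → ℕ → H →L[ℂ] H,
      (∀ m : ℤ, IsAdChain A ((U ^ m : unitary (H →L[ℂ] H)) : H →L[ℂ] H) (E m) k) →
        (∀ j ≤ k, Summable (fun m : ℤ => c m • E m j)) ∧
        IsAdChain A (∑' m : ℤ, c m • ((U ^ m : unitary (H →L[ℂ] H)) : H →L[ℂ] H))
          (fun j => ∑' m : ℤ, c m • E m j) k) := by
  classical
  have hcan : ∀ m : ℤ, IsAdChain A ((U ^ m : unitary (H →L[ℂ] H)) : H →L[ℂ] H)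
      (canChain D m) k := fun m => canChain_isAdChain hA hD m
  obtain ⟨C, hC1, hCb⟩ := canChain_bound (A := A) hD
  obtain ⟨K, hK0, hK⟩ := fourier_decay (k + 2) φ hper (by exact_mod_cast hsmooth)
  have hcK : ∀ m : ℤ, m ≠ 0 → ‖c m‖ * ((m.natAbs : ℝ)) ^ (k + 2) ≤ K := by
    intro m hm
    rw [hc m, c_eq_fourierCoeffOn]
    exact hK m hm
  have hsumcan : ∀ j ≤ k, Summable (fun m : ℤ => c m • canChain D m j) := by
    intro j hj
    apply Summable.of_norm_bounded_eventually (g := fun m : ℤ => (K * (C * 2 ^ k)) * (1 / (m:ℝ) ^ 2))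
      ((Real.summable_one_div_int_pow.mpr (by norm_num)).mul_left _)
    rw [Filter.eventually_cofinite]
    apply Set.Finite.subset (Set.finite_singleton (0 : ℤ))
    intro m hm
    simp only [Set.mem_setOf_eq, Set.mem_singleton_iff] at hm ⊢
    by_contra hm0
    apply hm
    have hna1 : (1 : ℝ) ≤ (m.natAbs : ℝ) := by
      exact_mod_cast Nat.one_le_iff_ne_zero.mpr (fun h => hm0 (Int.natAbs_eq_zero.mp h))
    have hna0 : (0 : ℝ) < (m.natAbs : ℝ) := by linarith
    have hcm : ‖c m‖ ≤ K / (m.natAbs : ℝ) ^ (k + 2) := by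
      rw [le_div_iff₀ (by positivity)]
      exact hcK m hm0
    have hEb : ‖canChain D m j‖ ≤ C * (2 * (m.natAbs : ℝ)) ^ k := by
      calc ‖canChain D m j‖ ≤ C * ((m.natAbs : ℝ) + 1) ^ j := hCb m j hj
      _ ≤ C * ((m.natAbs : ℝ) + 1) ^ k := by
          apply mul_le_mul_of_nonneg_left _ (by linarith)
          apply pow_le_pow_right₀ (by linarith) hj
      _ ≤ C * (2 * (m.natAbs : ℝ)) ^ k := by
          apply mul_le_mul_of_nonneg_left _ (by linarith)
          apply pow_le_pow_left₀ (by linarith) (by linarith)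
    have habs2 : ((m : ℝ)) ^ 2 = ((m.natAbs : ℝ)) ^ 2 := by
      rw [← sq_abs]
      congr 1
      rw [Nat.cast_natAbs]
      push_cast
      ring
    calc ‖c m • canChain D m j‖ = ‖c m‖ * ‖canChain D m j‖ := norm_smul _ _
    _ ≤ (K / (m.natAbs : ℝ) ^ (k + 2)) * (C * (2 * (m.natAbs : ℝ)) ^ k) := by
        apply mul_le_mul hcm hEb (norm_nonneg _) (by positivity)
    _ = (K * (C * 2 ^ k)) * (1 / ((m.natAbs : ℝ)) ^ 2) := by
        rw [mul_pow]
        field_simp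
        ring
    _ = (K * (C * 2 ^ k)) * (1 / (m:ℝ) ^ 2) := by rw [habs2]
  have h0 : Summable (fun m : ℤ => c m • ((U ^ m : unitary (H →L[ℂ] H)) : H →L[ℂ] H)) :=
    (hsumcan 0 (Nat.zero_le k)).congr (fun m => by rw [(hcan m).1])
  refine ⟨h0, ⟨fun m => canChain D m, hcan⟩, ?_⟩
  intro E hE
  have hEeq : ∀ m, ∀ j ≤ k, E m j = canChain D m j := fun m =>
    chain_unique hA (hE m) (hcan m)
  have hsumE : ∀ j ≤ k, Summable fun m : ℤ => c m • E m j := fun j hj =>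
    (hsumcan j hj).congr (fun m => by rw [hEeq m j hj])
  refine ⟨hsumE, ?_, ?_⟩
  · show (∑' m : ℤ, c m • E m 0) = _
    exact tsum_congr fun m => by rw [(hE m).1]
  · intro j hj
    exact comm_tsum (fun m => comm_smul _ ((hE m).2 j hj)) (hsumE j (by omega))
      (hsumE (j + 1) (by omega))
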